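/- Let λ, c₁, c₂, Γ₁, Γ₂, B > 0 with 2λc₁ > 1 and 2λc₂ ≠ 1, let β₁ ∈ (0,1), and set i₀ = ⌈2λc₁⌉. Then there exist constants C > 0 and T₀ ∈ ℕ such that for every integer T ≥ T₀ with β₁T ∈ ℕ and every sequence of nonnegative reals (a_t)_{t=i₀}^{T+1} with a_{i₀} ≤ 4B², a_{t+1} ≤ (1 − 2λc₁/t) a_t + c₁²Γ₁²/t² for i₀ ≤ t ≤ β₁T, and a_{t+1} ≤ (1 − 2λc₂/t) a_t + c₂²Γ₂²/t² for β₁T < t ≤ T, one has a_{T+1} ≤ (1/T)·[ 4Γ₁² β₁^{2λc₂−1} c₁²/(2λc₁ − 1) + 4Γ₂² (1 − β₁^{2λc₂−1}) c₂²/(2λc₂ − 1) ] + C / T^{min(2, 2λc₁)}. -/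

import Mathlib

open Real Set

lemma bern_low (a : ℝ) (ha : 0 ≤ a) : ∀ u : ℝ, 0 ≤ u → 1 - a * u ≤ (1 + u) ^ (-a) := by
  have hmono : MonotoneOn (fun u : ℝ => (1 + u) ^ (-a) + a * u) (Set.Ici 0) := by
    have hder : ∀ x : ℝ, 0 ≤ x →
        HasDerivAt (fun u : ℝ => (1 + u) ^ (-a) + a * u)
          (1 * (-a) * (1 + x) ^ (-a - 1) + a * 1) x := by
      intro x hx
      have h1 : HasDerivAt (fun u : ℝ => 1 + u) 1 x := (hasDerivAt_id x).const_add 1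
      have h2 := h1.rpow_const (p := -a) (Or.inl (by positivity))
      exact h2.add ((hasDerivAt_id x).const_mul a)
    apply monotoneOn_of_deriv_nonneg (convex_Ici 0)
    · exact fun x hx => ((hder x hx).differentiableAt).continuousAt.continuousWithinAt
    · intro x hx
      rw [interior_Ici] at hx
      exact ((hder x (le_of_lt hx)).differentiableAt).differentiableWithinAt
    · intro x hx
      rw [interior_Ici] at hx
      have hx' : (0:ℝ) < x := hx
      rw [(hder x (le_of_lt hx)).deriv]
      have : (1 + x) ^ (-a - 1) ≤ 1 :=
        Real.rpow_le_one_of_one_le_of_nonpos (by linarith) (by linarith)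
      nlinarith [Real.rpow_nonneg (by linarith : (0:ℝ) ≤ 1 + x) (-a - 1)]
  intro u hu
  have := hmono (Set.self_mem_Ici) (Set.mem_Ici.2 hu) hu
  simp only [add_zero, Real.one_rpow, mul_zero] at this
  linarith

lemma bern_up (a : ℝ) (ha : 0 ≤ a) : ∀ u : ℝ, 0 ≤ u →
    (1 + u) ^ (-a) ≤ 1 - a * u + a * (a + 1) * u ^ 2 / 2 := by
  have hmono : MonotoneOn
      (fun u : ℝ => 1 - a * u + a * (a + 1) * u ^ 2 / 2 - (1 + u) ^ (-a)) (Set.Ici 0) := by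
    have hder : ∀ x : ℝ, 0 ≤ x →
        HasDerivAt (fun u : ℝ => 1 - a * u + a * (a + 1) * u ^ 2 / 2 - (1 + u) ^ (-a))
          (-(a * 1) + a * (a + 1) * (2 * x) / 2 - 1 * (-a) * (1 + x) ^ (-a - 1)) x := by
      intro x hx
      have h1 : HasDerivAt (fun u : ℝ => 1 + u) 1 x := (hasDerivAt_id x).const_add 1
      have h2 := h1.rpow_const (p := -a) (Or.inl (by positivity))
      have h3 : HasDerivAt (fun u : ℝ => 1 - a * u) (-(a * 1)) x :=
        (((hasDerivAt_id x).const_mul a).neg).const_add 1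
      have h4 : HasDerivAt (fun u : ℝ => u ^ 2) (2 * x) x := by
        simpa using (hasDerivAt_pow 2 x)
      have h5 : HasDerivAt (fun u : ℝ => a * (a + 1) * u ^ 2 / 2)
          (a * (a + 1) * (2 * x) / 2) x := (h4.const_mul (a * (a + 1))).div_const 2
      exact (h3.add h5).sub h2
    apply monotoneOn_of_deriv_nonneg (convex_Ici 0)
    · exact fun x hx => ((hder x hx).differentiableAt).continuousAt.continuousWithinAt
    · intro x hx
      rw [interior_Ici] at hx
      exact ((hder x (le_of_lt hx)).differentiableAt).differentiableWithinAt
    · intro x hx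
      rw [interior_Ici] at hx
      have hx' : (0:ℝ) < x := hx
      rw [(hder x (le_of_lt hx)).deriv]
      have hb := bern_low (a + 1) (by linarith) x (le_of_lt hx)
      have : (1 + x) ^ (-(a + 1)) = (1 + x) ^ (-a - 1) := by ring_nf
      rw [this] at hb
      nlinarith [hx'.le]
  intro u hu
  have := hmono (Set.self_mem_Ici) (Set.mem_Ici.2 hu) hu
  simp only [add_zero, Real.one_rpow, mul_zero, mul_pow] at this
  nlinarith [this]

lemma rpow_succ_low (c t : ℝ) (hc : 0 ≤ c) (ht : 1 ≤ t) :
    (1 - c / t) * t ^ (-c) ≤ (t + 1) ^ (-c) := by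
  have ht0 : (0:ℝ) < t := by linarith
  have hsplit : (t + 1) ^ (-c) = t ^ (-c) * (1 + 1/t) ^ (-c) := by
    rw [← Real.mul_rpow (le_of_lt ht0) (by positivity)]
    congr 1
    field_simp
  rw [hsplit]
  have hb := bern_low c hc (1/t) (by positivity)
  have h1 : 1 - c / t = 1 - c * (1/t) := by ring
  have := Real.rpow_nonneg (le_of_lt ht0) (-c)
  calc (1 - c / t) * t ^ (-c) ≤ (1 + 1/t) ^ (-c) * t ^ (-c) := by
        rw [h1]; exact mul_le_mul_of_nonneg_right hb this
    _ = t ^ (-c) * (1 + 1/t) ^ (-c) := by ring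

lemma rpow_succ_up (c t : ℝ) (hc : 0 ≤ c) (ht : 1 ≤ t) :
    (t + 1) ^ (-c) ≤ (1 - c / t + c * (c + 1) / (2 * t ^ 2)) * t ^ (-c) := by
  have ht0 : (0:ℝ) < t := by linarith
  have hsplit : (t + 1) ^ (-c) = t ^ (-c) * (1 + 1/t) ^ (-c) := by
    rw [← Real.mul_rpow (le_of_lt ht0) (by positivity)]
    congr 1
    field_simp
  rw [hsplit]
  have hb := bern_up c hc (1/t) (by positivity)
  have h1 : 1 - c * (1/t) + c * (c+1) * (1/t)^2 / 2 = 1 - c / t + c * (c + 1) / (2 * t ^ 2) := by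
    field_simp
  rw [h1] at hb
  have := Real.rpow_nonneg (le_of_lt ht0) (-c)
  calc t ^ (-c) * (1 + 1/t) ^ (-c)
      ≤ t ^ (-c) * (1 - c / t + c * (c + 1) / (2 * t ^ 2)) :=
        mul_le_mul_of_nonneg_left hb this
    _ = (1 - c / t + c * (c + 1) / (2 * t ^ 2)) * t ^ (-c) := by ring

lemma phase1 (α G ν μ q : ℝ) (hα : 1 < α) (hG : 0 ≤ G) (hν : ν = G / (α - 1))
    (hq : q = min 2 α) (hμ : 0 ≤ μ)
    (n0 m : ℕ) (hn0 : α ≤ (n0:ℝ))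
    (a : ℕ → ℝ) (hbase : a n0 ≤ ν / n0 + μ * (n0:ℝ) ^ (-q))
    (hrec : ∀ t : ℕ, n0 ≤ t → t ≤ m → a (t+1) ≤ (1 - α / t) * a t + G / (t:ℝ)^2) :
    ∀ t : ℕ, n0 ≤ t → t ≤ m + 1 → a t ≤ ν / t + μ * (t:ℝ) ^ (-q) := by
  have hν0 : 0 ≤ ν := by
    rw [hν]; apply div_nonneg hG; linarith
  have hq0 : 0 ≤ q := by rw [hq]; positivity
  have hqα : q ≤ α := by rw [hq]; exact min_le_right _ _
  intro t ht
  induction t, ht using Nat.le_induction with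
  | base => intro _; exact hbase
  | succ t ht IH =>
    intro htm
    have htm' : t ≤ m := by omega
    have hb := IH (by omega)
    have ht1 : (1:ℝ) ≤ (t:ℝ) := by
      have h1 : (1:ℝ) < (n0:ℝ) := lt_of_lt_of_le hα hn0
      have h2 : (n0:ℝ) ≤ (t:ℝ) := by exact_mod_cast ht
      linarith
    have ht0 : (0:ℝ) < (t:ℝ) := by linarith
    have hαt : α ≤ (t:ℝ) := le_trans hn0 (by exact_mod_cast ht)
    have hfac : 0 ≤ 1 - α / (t:ℝ) := by
      rw [sub_nonneg, div_le_one ht0]; exact hαt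
    have hrp : (0:ℝ) ≤ (t:ℝ) ^ (-q) := Real.rpow_nonneg (le_of_lt ht0) _
    have chain : a (t+1) ≤ (1 - α/(t:ℝ)) * (ν / t + μ * (t:ℝ) ^ (-q)) + G / (t:ℝ)^2 :=
      le_trans (hrec t ht htm') (by nlinarith [mul_le_mul_of_nonneg_left hb hfac])
    have hGν : G = (α - 1) * ν := by
      rw [hν, mul_div_cancel₀]
      intro h; rw [sub_eq_zero] at h; exact absurd h.symm (ne_of_lt hα)
    have pieceA : (1 - α/(t:ℝ)) * (ν / t) + G / (t:ℝ)^2 ≤ ν / ((t:ℝ)+1) := by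
      have e1 : (1 - α/(t:ℝ)) * (ν / t) + G / (t:ℝ)^2 = ν * ((t:ℝ)-1) / (t:ℝ)^2 := by
        rw [hGν]; field_simp; ring
      rw [e1, div_le_div_iff₀ (by positivity) (by positivity)]
      nlinarith
    have pieceB : (1 - α/(t:ℝ)) * (μ * (t:ℝ) ^ (-q)) ≤ μ * ((t:ℝ)+1) ^ (-q) := by
      have h2 : (1 - α/(t:ℝ)) ≤ (1 - q/(t:ℝ)) := by
        have : q / (t:ℝ) ≤ α / (t:ℝ) := by gcongr
        linarith
      have h3 := rpow_succ_low q (t:ℝ) hq0 ht1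
      calc (1 - α/(t:ℝ)) * (μ * (t:ℝ) ^ (-q)) = ((1 - α/(t:ℝ)) * (t:ℝ) ^ (-q)) * μ := by ring
        _ ≤ ((1 - q/(t:ℝ)) * (t:ℝ) ^ (-q)) * μ := by
            apply mul_le_mul_of_nonneg_right _ hμ
            exact mul_le_mul_of_nonneg_right h2 hrp
        _ ≤ ((t:ℝ)+1) ^ (-q) * μ := mul_le_mul_of_nonneg_right h3 hμ
        _ = μ * ((t:ℝ)+1) ^ (-q) := by ring
    push_cast
    calc a (t+1) ≤ (1 - α/(t:ℝ)) * (ν / t + μ * (t:ℝ) ^ (-q)) + G / (t:ℝ)^2 := chain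
      _ = ((1 - α/(t:ℝ)) * (ν / t) + G / (t:ℝ)^2) + (1 - α/(t:ℝ)) * (μ * (t:ℝ) ^ (-q)) := by
          ring
      _ ≤ ν / ((t:ℝ)+1) + μ * ((t:ℝ)+1) ^ (-q) := add_le_add pieceA pieceB

lemma absD (D P Q R K M : ℝ) (hgap : 0 ≤ Q - P) (hgap2 : Q - P ≤ K * R)
    (hK : 0 ≤ K) (hRM : R ≤ M) : D * P ≤ D * Q + K * |D| * M := by
  have s1 : -D * (Q - P) ≤ |D| * (Q - P) := mul_le_mul_of_nonneg_right (neg_le_abs D) hgap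
  have s2 : |D| * (Q - P) ≤ |D| * (K * R) := mul_le_mul_of_nonneg_left hgap2 (abs_nonneg D)
  have s3 : |D| * (K * R) ≤ |D| * (K * M) := by
    apply mul_le_mul_of_nonneg_left _ (abs_nonneg D)
    exact mul_le_mul_of_nonneg_left hRM hK
  nlinarith [s1, s2, s3]

lemma phase2 (α G ν : ℝ) (hα : 0 < α) (hGν : G = (α - 1) * ν)
    (m T : ℕ) (hm : α ≤ (m:ℝ) + 1) (hm1 : 1 ≤ m)
    (a : ℕ → ℝ) (D δ : ℝ)
    (hD : D = (a (m+1) - ν / ((m:ℝ)+1)) * ((m:ℝ)+1) ^ α)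
    (hδ : δ = |ν| / ((m:ℝ)+1) ^ 3 + (α*(α+1)/2) * |D| * ((m:ℝ)+1) ^ (-(α+2)))
    (hrec : ∀ t : ℕ, m < t → t ≤ T → a (t+1) ≤ (1 - α / t) * a t + G / (t:ℝ)^2) :
    ∀ t : ℕ, m + 1 ≤ t → t ≤ T + 1 →
      a t ≤ ν / t + D * (t:ℝ) ^ (-α) + ((t:ℝ) - ((m:ℝ)+1)) * δ := by
  have hm0 : (0:ℝ) < (m:ℝ) + 1 := by positivity
  have hδ0 : 0 ≤ δ := by rw [hδ]; positivity
  intro t ht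
  induction t, ht using Nat.le_induction with
  | base =>
    intro _
    have e1 : ((m:ℝ)+1) ^ α * ((m:ℝ)+1) ^ (-α) = 1 := by
      rw [← Real.rpow_add hm0]; simp
    have e2 : D * ((m:ℝ)+1) ^ (-α) = a (m+1) - ν / ((m:ℝ)+1) := by
      rw [hD, mul_assoc, e1, mul_one]
    push_cast
    rw [e2]
    have e3 : ((m:ℝ)+1 - ((m:ℝ)+1)) * δ = 0 := by ring
    rw [e3]
    linarith
  | succ t ht IH =>
    intro htm
    have htm' : t ≤ T := by omega
    have hb := IH (by omega)
    have htl : (m:ℝ) + 1 ≤ (t:ℝ) := by exact_mod_cast ht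
    have ht1 : (1:ℝ) ≤ (t:ℝ) := by
      have : (1:ℝ) ≤ (m:ℝ) := by exact_mod_cast hm1
      linarith
    have ht0 : (0:ℝ) < (t:ℝ) := by linarith
    have hαt : α ≤ (t:ℝ) := le_trans hm htl
    have hfac : 0 ≤ 1 - α / (t:ℝ) := by
      rw [sub_nonneg, div_le_one ht0]; exact hαt
    have hfac1 : 1 - α / (t:ℝ) ≤ 1 := by
      have : 0 ≤ α / (t:ℝ) := by positivity
      linarith
    set s : ℝ := ((t:ℝ) - ((m:ℝ)+1)) * δ with hs
    have hs0 : 0 ≤ s := mul_nonneg (by linarith) hδ0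
    have chain : a (t+1) ≤ (1 - α/(t:ℝ)) * (ν / t + D * (t:ℝ) ^ (-α) + s) + G / (t:ℝ)^2 :=
      le_trans (hrec t (by omega) htm') (by nlinarith [mul_le_mul_of_nonneg_left hb hfac])
    have pieceA : (1 - α/(t:ℝ)) * (ν / t) + G / (t:ℝ)^2 ≤
        ν / ((t:ℝ)+1) + |ν| / ((m:ℝ)+1) ^ 3 := by
      have e1 : (1 - α/(t:ℝ)) * (ν / t) + G / (t:ℝ)^2 = ν * ((t:ℝ)-1) / (t:ℝ)^2 := by
        rw [hGν]; field_simp; ring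
      have e2 : ν / ((t:ℝ)+1) - ν * ((t:ℝ)-1) / (t:ℝ)^2 = ν / ((t:ℝ)^2*((t:ℝ)+1)) := by
        field_simp; ring
      have hcube : ((m:ℝ)+1)^3 ≤ (t:ℝ)^2*((t:ℝ)+1) := by
        have h31 : ((m:ℝ)+1)^3 ≤ (t:ℝ)^3 := pow_le_pow_left₀ (le_of_lt hm0) htl 3
        nlinarith
      have h3 : |ν| / ((t:ℝ)^2*((t:ℝ)+1)) ≤ |ν| / ((m:ℝ)+1) ^ 3 :=
        div_le_div_of_nonneg_left (abs_nonneg ν) (by positivity) hcube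
      have h4 : -|ν| / ((t:ℝ)^2*((t:ℝ)+1)) ≤ ν / ((t:ℝ)^2*((t:ℝ)+1)) :=
        (div_le_div_iff_of_pos_right (by positivity)).2 (neg_abs_le ν)
      have h5 : -|ν| / ((t:ℝ)^2*((t:ℝ)+1)) = -(|ν| / ((t:ℝ)^2*((t:ℝ)+1))) := neg_div _ _
      linarith
    have pieceB : (1 - α/(t:ℝ)) * (D * (t:ℝ) ^ (-α)) ≤
        D * ((t:ℝ)+1) ^ (-α) + (α*(α+1)/2) * |D| * ((m:ℝ)+1) ^ (-(α+2)) := by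
      have hlow := rpow_succ_low α (t:ℝ) (le_of_lt hα) ht1
      have hup := rpow_succ_up α (t:ℝ) (le_of_lt hα) ht1
      have hgap : 0 ≤ ((t:ℝ)+1) ^ (-α) - (1 - α/(t:ℝ)) * (t:ℝ) ^ (-α) := by linarith
      have e5 : (1 - α/(t:ℝ) + α*(α+1)/(2*(t:ℝ)^2)) * (t:ℝ) ^ (-α)
          = (1 - α/(t:ℝ)) * (t:ℝ) ^ (-α) + (α*(α+1)/2) * ((t:ℝ) ^ (-α)/(t:ℝ)^2) := by
        ring
      have hgap2 : ((t:ℝ)+1) ^ (-α) - (1 - α/(t:ℝ)) * (t:ℝ) ^ (-α)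
          ≤ (α*(α+1)/2) * ((t:ℝ) ^ (-α)/(t:ℝ)^2) := by linarith
      have hmono : (t:ℝ) ^ (-α)/(t:ℝ)^2 ≤ ((m:ℝ)+1) ^ (-(α+2)) := by
        have e4 : (t:ℝ) ^ (-α)/(t:ℝ)^2 = (t:ℝ) ^ (-(α+2)) := by
          rw [← Real.rpow_natCast (t:ℝ) 2, ← Real.rpow_sub ht0]
          congr 1
          push_cast
          ring
        rw [e4]
        exact Real.rpow_le_rpow_of_nonpos hm0 htl (by linarith)
      have key := absD D ((1 - α/(t:ℝ)) * (t:ℝ) ^ (-α)) (((t:ℝ)+1) ^ (-α))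
        ((t:ℝ) ^ (-α)/(t:ℝ)^2) (α*(α+1)/2) (((m:ℝ)+1) ^ (-(α+2)))
        hgap hgap2 (by positivity) hmono
      calc (1 - α/(t:ℝ)) * (D * (t:ℝ) ^ (-α)) = D * ((1 - α/(t:ℝ)) * (t:ℝ) ^ (-α)) := by ring
        _ ≤ D * ((t:ℝ)+1) ^ (-α) + (α*(α+1)/2) * |D| * ((m:ℝ)+1) ^ (-(α+2)) := key
    have pieceC : (1 - α/(t:ℝ)) * s ≤ s := by
      calc (1 - α/(t:ℝ)) * s ≤ 1 * s := mul_le_mul_of_nonneg_right hfac1 hs0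
        _ = s := one_mul s
    push_cast
    calc a (t+1) ≤ (1 - α/(t:ℝ)) * (ν / t + D * (t:ℝ) ^ (-α) + s) + G / (t:ℝ)^2 := chain
      _ = ((1 - α/(t:ℝ)) * (ν / t) + G / (t:ℝ)^2) + (1 - α/(t:ℝ)) * (D * (t:ℝ) ^ (-α))
            + (1 - α/(t:ℝ)) * s := by ring
      _ ≤ (ν / ((t:ℝ)+1) + |ν| / ((m:ℝ)+1) ^ 3)
            + (D * ((t:ℝ)+1) ^ (-α) + (α*(α+1)/2) * |D| * ((m:ℝ)+1) ^ (-(α+2))) + s := by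
          linarith
      _ = ν / ((t:ℝ)+1) + D * ((t:ℝ)+1) ^ (-α) + (((t:ℝ)+1) - ((m:ℝ)+1)) * δ := by
          rw [hs, hδ]; ring


lemma rpow_lip (b p : ℝ) (hb0 : 0 < b) (x y : ℝ)
    (hx : x ∈ Set.Icc b 1) (hy : y ∈ Set.Icc b 1) :
    |x ^ p - y ^ p| ≤ (|p| * (b ^ (p - 1) + 1)) * |x - y| := by
  have key := Convex.norm_image_sub_le_of_norm_hasDerivWithin_le
    (f := fun z : ℝ => z ^ p) (f' := fun z : ℝ => p * z ^ (p - 1))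
    (s := Set.Icc b 1) (C := |p| * (b ^ (p - 1) + 1))
    (fun z hz => (Real.hasDerivAt_rpow_const
      (Or.inl (ne_of_gt (lt_of_lt_of_le hb0 hz.1)))).hasDerivWithinAt)
    (fun z hz => by
      have hz0 : 0 < z := lt_of_lt_of_le hb0 hz.1
      have hznn : 0 ≤ z ^ (p - 1) := Real.rpow_nonneg hz0.le _
      have hbound : z ^ (p - 1) ≤ b ^ (p - 1) + 1 := by
        rcases le_or_gt (p - 1) 0 with hp | hp
        · have := Real.rpow_le_rpow_of_nonpos hb0 hz.1 hp
          linarith [Real.rpow_nonneg hb0.le (p - 1)]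
        · have : z ^ (p - 1) ≤ 1 := Real.rpow_le_one hz0.le hz.2 hp.le
          linarith [Real.rpow_nonneg hb0.le (p - 1)]
      rw [Real.norm_eq_abs, abs_mul, abs_of_nonneg hznn]
      have : |p| * z ^ (p - 1) ≤ |p| * (b ^ (p - 1) + 1) :=
        mul_le_mul_of_nonneg_left hbound (abs_nonneg p)
      exact this)
    (convex_Icc b 1) hy hx
  simpa [Real.norm_eq_abs] using key

set_option maxHeartbeats 1000000

/-- Regret bound for two-phase SGD with heterogeneous noise (case `2λc₂ ≠ 1`):
any nonnegative sequence satisfying the error recursions with learning rates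
`c₁/t` (noise `Γ₁`) on the first `β₁T` steps and `c₂/t` (noise `Γ₂`) on the
remaining steps, started from `a_{i₀} ≤ 4B²`, satisfies
`a_{T+1} ≤ (1/T)[4Γ₁²β₁^{2λc₂-1}c₁²/(2λc₁-1) + 4Γ₂²(1-β₁^{2λc₂-1})c₂²/(2λc₂-1)]
            + C/T^{min(2,2λc₁)}`. -/
theorem statement_12 (lam c1 c2 Γ1 Γ2 B : ℝ)
    (hlam : 0 < lam) (hc1 : 0 < c1) (hc2 : 0 < c2)
    (hΓ1 : 0 < Γ1) (hΓ2 : 0 < Γ2) (hB : 0 < B)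
    (h1 : 1 < 2 * lam * c1) (h2 : 2 * lam * c2 ≠ 1)
    (β : ℝ) (hβ : β ∈ Set.Ioo (0 : ℝ) 1) :
    ∃ C : ℝ, 0 < C ∧ ∃ T0 : ℕ, ∀ T : ℕ, T0 ≤ T →
      ∀ m : ℕ, (m : ℝ) = β * T →
        ∀ a : ℕ → ℝ,
          (∀ t, ⌈2 * lam * c1⌉₊ ≤ t → t ≤ T + 1 → 0 ≤ a t) →
          a ⌈2 * lam * c1⌉₊ ≤ 4 * B ^ 2 →
          (∀ t, ⌈2 * lam * c1⌉₊ ≤ t → t ≤ m →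
            a (t + 1) ≤ (1 - 2 * lam * c1 / t) * a t + c1 ^ 2 * Γ1 ^ 2 / (t : ℝ) ^ 2) →
          (∀ t, m < t → t ≤ T →
            a (t + 1) ≤ (1 - 2 * lam * c2 / t) * a t + c2 ^ 2 * Γ2 ^ 2 / (t : ℝ) ^ 2) →
          a (T + 1) ≤
            (1 / T) * (4 * Γ1 ^ 2 * β ^ (2 * lam * c2 - 1) * c1 ^ 2 / (2 * lam * c1 - 1) +
                4 * Γ2 ^ 2 * (1 - β ^ (2 * lam * c2 - 1)) * c2 ^ 2 / (2 * lam * c2 - 1)) +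
              C / (T : ℝ) ^ (min (2 : ℝ) (2 * lam * c1)) := by
  obtain ⟨hβ0, hβ1⟩ := hβ
  set α₁ := 2 * lam * c1 with hα₁def
  set α₂ := 2 * lam * c2 with hα₂def
  have hα₂0 : 0 < α₂ := by rw [hα₂def]; positivity
  set i0 := ⌈α₁⌉₊ with hi0def
  set G1 := c1 ^ 2 * Γ1 ^ 2 with hG1def
  set G2 := c2 ^ 2 * Γ2 ^ 2 with hG2def
  have hG1nn : 0 ≤ G1 := by rw [hG1def]; positivity
  have hG2nn : 0 ≤ G2 := by rw [hG2def]; positivity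
  set ν1 := G1 / (α₁ - 1) with hν1def
  set ν2 := G2 / (α₂ - 1) with hν2def
  have hν1nn : 0 ≤ ν1 := by
    rw [hν1def]; apply div_nonneg hG1nn; linarith
  set q := min (2:ℝ) α₁ with hqdef
  have hq1 : 1 ≤ q := by rw [hqdef]; exact le_min one_le_two h1.le
  have hq2 : q ≤ 2 := by rw [hqdef]; exact min_le_left _ _
  have hq0 : 0 ≤ q := by linarith
  set μ1 := 4 * B ^ 2 * (i0:ℝ) ^ q with hμ1def
  have hi0α : α₁ ≤ (i0:ℝ) := Nat.le_ceil _
  have hi0pos : (0:ℝ) < (i0:ℝ) := by linarith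
  have hμ1nn : 0 ≤ μ1 := by
    rw [hμ1def]
    have := Real.rpow_nonneg hi0pos.le q
    positivity
  set β' := β ^ (α₂ - 1) with hβ'def
  have hβ'pos : 0 < β' := by rw [hβ'def]; exact Real.rpow_pos_of_pos hβ0 _
  set Kα := α₂ * (α₂ + 1) / 2 with hKαdef
  have hKαnn : 0 ≤ Kα := by rw [hKαdef]; positivity
  set KL := |α₂ - 1| * (β ^ (α₂ - 2) + 1) with hKLdef
  have hKLnn : 0 ≤ KL := by
    rw [hKLdef]
    have := Real.rpow_nonneg hβ0.le (α₂ - 2)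
    positivity
  set W := ν1 + μ1 + |ν2| with hWdef
  have hWnn : 0 ≤ W := by
    rw [hWdef]
    have := abs_nonneg ν2
    linarith
  set E1 := |ν1 - ν2| * KL * (1 - β) with hE1def
  have hE1nn : 0 ≤ E1 := by
    rw [hE1def]
    apply mul_nonneg (mul_nonneg (abs_nonneg _) hKLnn)
    linarith
  set E3 := (|ν2| + Kα * W) / β ^ 3 with hE3def
  have hE3nn : 0 ≤ E3 := by
    rw [hE3def]
    apply div_nonneg _ (by positivity)
    have h21 := abs_nonneg ν2
    have h22 := mul_nonneg hKαnn hWnn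
    linarith
  have hβq : (0:ℝ) < β ^ (-q) := Real.rpow_pos_of_pos hβ0 _
  have hCpos : 0 < E1 + μ1 * β ^ (-q) + E3 + 1 := by
    have h9 := mul_nonneg hμ1nn hβq.le
    linarith
  refine ⟨E1 + μ1 * β ^ (-q) + E3 + 1, hCpos, ⌈((i0:ℝ) + α₂ + 2) / β⌉₊, ?_⟩
  intro T hT m hmβ a hann ha0 hrec1 hrec2
  -- basic size facts
  have hTc : (⌈((i0:ℝ) + α₂ + 2) / β⌉₊ : ℝ) ≤ (T:ℝ) := by exact_mod_cast hT
  have hTbig : (i0:ℝ) + α₂ + 2 ≤ β * T := by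
    have h := Nat.le_ceil (((i0:ℝ) + α₂ + 2) / β)
    have hd : ((i0:ℝ) + α₂ + 2) / β ≤ (T:ℝ) := le_trans h hTc
    calc (i0:ℝ) + α₂ + 2 = (((i0:ℝ) + α₂ + 2) / β) * β := by field_simp
      _ ≤ (T:ℝ) * β := mul_le_mul_of_nonneg_right hd hβ0.le
      _ = β * T := by ring
  have hmbig : (i0:ℝ) + α₂ + 2 ≤ (m:ℝ) := by rw [hmβ]; exact hTbig
  have hi0m : i0 ≤ m := by
    have h : (i0:ℝ) ≤ (m:ℝ) := by linarith
    exact Nat.cast_le.mp h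
  have hm1 : 1 ≤ m := by
    have : (1:ℝ) ≤ (m:ℝ) := by linarith [(by positivity : (0:ℝ) ≤ (i0:ℝ))]
    exact_mod_cast this
  have hmT : m ≤ T := by
    have h9 : (m:ℝ) ≤ (T:ℝ) := by
      rw [hmβ]
      calc β * (T:ℝ) ≤ 1 * (T:ℝ) :=
            mul_le_mul_of_nonneg_right hβ1.le (by positivity)
        _ = (T:ℝ) := one_mul _
    exact_mod_cast h9
  have hT1 : (1:ℝ) ≤ (T:ℝ) := by
    have h1m : (1:ℝ) ≤ (m:ℝ) := by exact_mod_cast hm1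
    have : (m:ℝ) ≤ (T:ℝ) := by exact_mod_cast hmT
    linarith
  have hT0 : (0:ℝ) < (T:ℝ) := by linarith
  have hm0 : (0:ℝ) < (m:ℝ) + 1 := by positivity
  have hβT0 : (0:ℝ) < β * T := by positivity
  have hβTm : β * (T:ℝ) ≤ (m:ℝ) + 1 := by rw [hmβ] at *; linarith
  -- phase 1
  have hbase : a i0 ≤ ν1 / i0 + μ1 * (i0:ℝ) ^ (-q) := by
    have hcancel : (i0:ℝ) ^ q * (i0:ℝ) ^ (-q) = 1 := by
      rw [← Real.rpow_add hi0pos]; simp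
    have he : μ1 * (i0:ℝ) ^ (-q) = 4 * B ^ 2 := by
      rw [hμ1def, mul_assoc, hcancel, mul_one]
    rw [he]
    have : 0 ≤ ν1 / i0 := div_nonneg hν1nn hi0pos.le
    linarith
  have h1m := phase1 α₁ G1 ν1 μ1 q h1 hG1nn hν1def hqdef hμ1nn i0 m hi0α a hbase hrec1
    (m+1) (by omega) (le_refl _)
  have h1m' : a (m+1) ≤ ν1 / ((m:ℝ)+1) + μ1 * ((m:ℝ)+1) ^ (-q) := by
    push_cast at h1m
    exact h1m
  -- phase 2
  have hα₂ne : α₂ - 1 ≠ 0 := sub_ne_zero.2 h2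
  have hG2ν : G2 = (α₂ - 1) * ν2 := by
    rw [hν2def, mul_div_cancel₀ _ hα₂ne]
  set D := (a (m+1) - ν2 / ((m:ℝ)+1)) * ((m:ℝ)+1) ^ α₂ with hDdef
  set δ := |ν2| / ((m:ℝ)+1) ^ 3 + Kα * |D| * ((m:ℝ)+1) ^ (-(α₂+2)) with hδdef
  have hδdef' : δ = |ν2| / ((m:ℝ)+1) ^ 3 + (α₂*(α₂+1)/2) * |D| * ((m:ℝ)+1) ^ (-(α₂+2)) := by
    rw [hδdef, hKαdef]
  have hm1α : α₂ ≤ (m:ℝ) + 1 := by linarith [(by positivity : (0:ℝ) ≤ (i0:ℝ))]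
  have hfin := phase2 α₂ G2 ν2 hα₂0 hG2ν m T hm1α hm1 a D δ hDdef hδdef' hrec2
    (T+1) (by omega) (le_refl _)
  have hfin' : a (T+1) ≤ ν2 / ((T:ℝ)+1) + D * ((T:ℝ)+1) ^ (-α₂)
      + (((T:ℝ)+1) - ((m:ℝ)+1)) * δ := by
    push_cast at hfin
    exact hfin
  -- final assembly
  set r := ((m:ℝ)+1) / ((T:ℝ)+1) with hrdef
  have hT10 : (0:ℝ) < (T:ℝ) + 1 := by linarith
  have hrβ : β ≤ r := by
    rw [hrdef, le_div_iff₀ hT10]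
    have e : β * ((T:ℝ)+1) = β * T + β := by ring
    rw [e, ← hmβ]
    linarith
  have hr1 : r ≤ 1 := by
    rw [hrdef, div_le_one hT10]
    have : (m:ℝ) ≤ (T:ℝ) := by exact_mod_cast hmT
    linarith
  have hr0 : 0 < r := lt_of_lt_of_le hβ0 hrβ
  have hrpow : r ^ α₂ = ((m:ℝ)+1) ^ α₂ * ((T:ℝ)+1) ^ (-α₂) := by
    rw [hrdef, Real.div_rpow hm0.le hT10.le, Real.rpow_neg hT10.le, div_eq_mul_inv]
  have hDexp : D * ((T:ℝ)+1) ^ (-α₂) = (a (m+1) - ν2 / ((m:ℝ)+1)) * r ^ α₂ := by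
    rw [hDdef, hrpow]; ring
  have hDle1 : a (m+1) - ν2 / ((m:ℝ)+1) ≤ (ν1 - ν2) / ((m:ℝ)+1) + μ1 * ((m:ℝ)+1) ^ (-q) := by
    have e := sub_div ν1 ν2 ((m:ℝ)+1)
    linarith [h1m']
  have hrα2nn : 0 ≤ r ^ α₂ := Real.rpow_nonneg hr0.le _
  have hsplit : r ^ α₂ = r ^ (α₂ - 1) * r := by
    conv_lhs => rw [show α₂ = α₂ - 1 + 1 by ring]
    rw [Real.rpow_add_one (ne_of_gt hr0)]
  have hterm2 : D * ((T:ℝ)+1) ^ (-α₂) ≤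
      (ν1 - ν2) * r ^ (α₂-1) / ((T:ℝ)+1) + μ1 * ((m:ℝ)+1) ^ (-q) * r ^ α₂ := by
    rw [hDexp]
    have h10 := mul_le_mul_of_nonneg_right hDle1 hrα2nn
    have e2 : (ν1 - ν2) / ((m:ℝ)+1) * r ^ α₂ = (ν1 - ν2) * r ^ (α₂-1) / ((T:ℝ)+1) := by
      rw [hsplit, hrdef]
      field_simp
    calc (a (m+1) - ν2 / ((m:ℝ)+1)) * r ^ α₂
        ≤ ((ν1 - ν2) / ((m:ℝ)+1) + μ1 * ((m:ℝ)+1) ^ (-q)) * r ^ α₂ := h10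
      _ = (ν1 - ν2) / ((m:ℝ)+1) * r ^ α₂ + μ1 * ((m:ℝ)+1) ^ (-q) * r ^ α₂ := by ring
      _ = (ν1 - ν2) * r ^ (α₂-1) / ((T:ℝ)+1) + μ1 * ((m:ℝ)+1) ^ (-q) * r ^ α₂ := by rw [e2]
  -- Lipschitz step
  have hrsub : r - β = (1 - β) / ((T:ℝ)+1) := by
    rw [hrdef, hmβ]
    field_simp
    ring
  have hlip := rpow_lip β (α₂ - 1) hβ0 r β ⟨hrβ, hr1⟩ ⟨le_refl β, hβ1.le⟩
  have hexp : α₂ - 1 - 1 = α₂ - 2 := by ring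
  rw [hexp] at hlip
  have habsrb : |r - β| = (1 - β) / ((T:ℝ)+1) := by
    rw [abs_of_nonneg (by linarith [hrβ] : (0:ℝ) ≤ r - β), hrsub]
  rw [habsrb] at hlip
  have hnum : ν2 + (ν1 - ν2) * r ^ (α₂ - 1) ≤ ν2 + (ν1 - ν2) * β' + E1 / ((T:ℝ)+1) := by
    have h11 : (ν1 - ν2) * (r ^ (α₂-1) - β') ≤ |ν1 - ν2| * (KL * ((1 - β)/((T:ℝ)+1))) := by
      calc (ν1 - ν2) * (r ^ (α₂-1) - β') ≤ |(ν1 - ν2) * (r ^ (α₂-1) - β')| := le_abs_self _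
        _ = |ν1 - ν2| * |r ^ (α₂-1) - β'| := abs_mul _ _
        _ ≤ |ν1 - ν2| * (KL * ((1 - β)/((T:ℝ)+1))) := by
            apply mul_le_mul_of_nonneg_left _ (abs_nonneg _)
            rw [hβ'def, hKLdef]
            exact le_trans hlip (le_of_eq (by ring))
    have e3 : |ν1 - ν2| * (KL * ((1 - β)/((T:ℝ)+1))) = E1 / ((T:ℝ)+1) := by
      rw [hE1def]; ring
    have e4 : (ν1 - ν2) * r ^ (α₂-1)
        = (ν1 - ν2) * β' + (ν1 - ν2) * (r ^ (α₂-1) - β') := by ring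
    linarith
  set X := ν2 + (ν1 - ν2) * β' with hXdef
  have hX0 : 0 ≤ X := by
    rcases lt_or_gt_of_ne h2 with hlt | hgt
    · have hν2np : ν2 ≤ 0 := by
        rw [hν2def]
        apply div_nonpos_of_nonneg_of_nonpos hG2nn (by linarith)
      have hβ'1 : 1 ≤ β' := by
        rw [hβ'def]
        exact Real.one_le_rpow_of_pos_of_le_one_of_nonpos hβ0 hβ1.le (by linarith)
      have h12 : (ν1 - ν2) * 1 ≤ (ν1 - ν2) * β' :=
        mul_le_mul_of_nonneg_left hβ'1 (by linarith)
      rw [hXdef]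
      linarith
    · have hν2nn : 0 ≤ ν2 := by
        rw [hν2def]; apply div_nonneg hG2nn; linarith
      have hβ'le1 : β' ≤ 1 := by
        rw [hβ'def]
        exact Real.rpow_le_one hβ0.le hβ1.le (by linarith)
      have h12 : 0 ≤ ν2 * (1 - β') := mul_nonneg hν2nn (by linarith)
      have h13 : 0 ≤ ν1 * β' := mul_nonneg hν1nn hβ'pos.le
      have e5 : ν2 + (ν1 - ν2) * β' = ν2 * (1 - β') + ν1 * β' := by ring
      rw [hXdef, e5]
      linarith
  have hM : 4 * Γ1 ^ 2 * β' * c1 ^ 2 / (α₁ - 1) + 4 * Γ2 ^ 2 * (1 - β') * c2 ^ 2 / (α₂ - 1)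
      = 4 * X := by
    rw [hXdef, hν1def, hν2def, hG1def, hG2def]
    ring
  have hTq0 : (0:ℝ) < (T:ℝ) ^ q := Real.rpow_pos_of_pos hT0 _
  have hT2q : (T:ℝ) ^ q ≤ (T:ℝ) ^ 2 := by
    have h14 : (T:ℝ) ^ q ≤ (T:ℝ) ^ (2:ℝ) := Real.rpow_le_rpow_of_exponent_le hT1 hq2
    rwa [show ((2:ℝ)) = ((2:ℕ):ℝ) by norm_num, Real.rpow_natCast] at h14
  have hA : ν2 / ((T:ℝ)+1) + (ν1 - ν2) * r ^ (α₂-1) / ((T:ℝ)+1)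
      ≤ 4 * X / (T:ℝ) + E1 / (T:ℝ) ^ q := by
    have l1 : ν2 / ((T:ℝ)+1) + (ν1 - ν2) * r ^ (α₂-1) / ((T:ℝ)+1)
        = (ν2 + (ν1 - ν2) * r ^ (α₂-1)) / ((T:ℝ)+1) := by ring
    have l2 : (ν2 + (ν1 - ν2) * r ^ (α₂-1)) / ((T:ℝ)+1)
        ≤ (X + E1 / ((T:ℝ)+1)) / ((T:ℝ)+1) := by
      apply div_le_div_of_nonneg_right ?_ hT10.le
      exact hnum
    have l3 : (X + E1 / ((T:ℝ)+1)) / ((T:ℝ)+1)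
        = X / ((T:ℝ)+1) + E1 / (((T:ℝ)+1) * ((T:ℝ)+1)) := by
      field_simp
    have l4 : X / ((T:ℝ)+1) ≤ X / (T:ℝ) :=
      div_le_div_of_nonneg_left hX0 hT0 (by linarith)
    have l5 : X / (T:ℝ) ≤ 4 * X / (T:ℝ) := by
      apply div_le_div_of_nonneg_right ?_ hT0.le
      linarith
    have l6 : E1 / (((T:ℝ)+1) * ((T:ℝ)+1)) ≤ E1 / (T:ℝ) ^ q := by
      apply div_le_div_of_nonneg_left hE1nn hTq0
      have e : ((T:ℝ)+1) * ((T:ℝ)+1) = (T:ℝ)^2 + 2*(T:ℝ) + 1 := by ring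
      linarith
    linarith
  have hBterm : μ1 * ((m:ℝ)+1) ^ (-q) * r ^ α₂ ≤ (μ1 * β ^ (-q)) / (T:ℝ) ^ q := by
    have b1 : r ^ α₂ ≤ 1 := Real.rpow_le_one hr0.le hr1 hα₂0.le
    have b2 : ((m:ℝ)+1) ^ (-q) ≤ (β * (T:ℝ)) ^ (-q) :=
      Real.rpow_le_rpow_of_nonpos hβT0 hβTm (by linarith)
    have b3 : (β * (T:ℝ)) ^ (-q) = β ^ (-q) * (T:ℝ) ^ (-q) :=
      Real.mul_rpow hβ0.le hT0.le
    have b4 : (T:ℝ) ^ (-q) = 1 / (T:ℝ) ^ q := by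
      rw [Real.rpow_neg hT0.le, one_div]
    have bnn : 0 ≤ μ1 * ((m:ℝ)+1) ^ (-q) :=
      mul_nonneg hμ1nn (Real.rpow_nonneg hm0.le _)
    calc μ1 * ((m:ℝ)+1) ^ (-q) * r ^ α₂ ≤ μ1 * ((m:ℝ)+1) ^ (-q) * 1 :=
          mul_le_mul_of_nonneg_left b1 bnn
      _ = μ1 * ((m:ℝ)+1) ^ (-q) := mul_one _
      _ ≤ μ1 * (β ^ (-q) * (T:ℝ) ^ (-q)) := by
          rw [← b3]
          exact mul_le_mul_of_nonneg_left b2 hμ1nn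
      _ = (μ1 * β ^ (-q)) / (T:ℝ) ^ q := by rw [b4]; ring
  -- δ term
  have hrm1 : (1:ℝ) ≤ (m:ℝ) + 1 := by
    have : (0:ℝ) ≤ (m:ℝ) := Nat.cast_nonneg m
    linarith
  have ha1nn : 0 ≤ a (m+1) := hann (m+1) (by omega) (by omega)
  have habsD : |D| ≤ W * ((m:ℝ)+1) ^ (α₂-1) := by
    have d1 : |D| = |a (m+1) - ν2 / ((m:ℝ)+1)| * ((m:ℝ)+1) ^ α₂ := by
      rw [hDdef, abs_mul, abs_of_nonneg (Real.rpow_nonneg hm0.le _)]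
    have d2 : |a (m+1) - ν2 / ((m:ℝ)+1)| ≤ a (m+1) + |ν2| / ((m:ℝ)+1) := by
      rw [sub_eq_add_neg]
      refine le_trans (abs_add_le _ _) ?_
      rw [abs_neg, abs_of_nonneg ha1nn, abs_div, abs_of_pos hm0]
    have d3 : a (m+1) + |ν2| / ((m:ℝ)+1)
        ≤ ν1 / ((m:ℝ)+1) + μ1 * ((m:ℝ)+1) ^ (-q) + |ν2| / ((m:ℝ)+1) := by
      linarith [h1m']
    have p1 : ((m:ℝ)+1) ^ α₂ / ((m:ℝ)+1) = ((m:ℝ)+1) ^ (α₂-1) := by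
      rw [Real.rpow_sub hm0, Real.rpow_one]
    have p2 : ((m:ℝ)+1) ^ (-q) * ((m:ℝ)+1) ^ α₂ = ((m:ℝ)+1) ^ (α₂-q) := by
      rw [← Real.rpow_add hm0]; congr 1; ring
    have d4 : (ν1 / ((m:ℝ)+1) + μ1 * ((m:ℝ)+1) ^ (-q) + |ν2| / ((m:ℝ)+1)) * ((m:ℝ)+1) ^ α₂
        = ν1 * (((m:ℝ)+1) ^ α₂ / ((m:ℝ)+1)) + μ1 * (((m:ℝ)+1) ^ (-q) * ((m:ℝ)+1) ^ α₂)
          + |ν2| * (((m:ℝ)+1) ^ α₂ / ((m:ℝ)+1)) := by ring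
    have d5 : ((m:ℝ)+1) ^ (α₂-q) ≤ ((m:ℝ)+1) ^ (α₂-1) :=
      Real.rpow_le_rpow_of_exponent_le hrm1 (by linarith)
    calc |D| = |a (m+1) - ν2 / ((m:ℝ)+1)| * ((m:ℝ)+1) ^ α₂ := d1
      _ ≤ (ν1 / ((m:ℝ)+1) + μ1 * ((m:ℝ)+1) ^ (-q) + |ν2| / ((m:ℝ)+1)) * ((m:ℝ)+1) ^ α₂ :=
          mul_le_mul_of_nonneg_right (le_trans d2 d3) (Real.rpow_nonneg hm0.le _)
      _ = ν1 * (((m:ℝ)+1) ^ α₂ / ((m:ℝ)+1)) + μ1 * (((m:ℝ)+1) ^ (-q) * ((m:ℝ)+1) ^ α₂)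
          + |ν2| * (((m:ℝ)+1) ^ α₂ / ((m:ℝ)+1)) := d4
      _ = ν1 * ((m:ℝ)+1) ^ (α₂-1) + μ1 * ((m:ℝ)+1) ^ (α₂-q) + |ν2| * ((m:ℝ)+1) ^ (α₂-1) := by
          rw [p1, p2]
      _ ≤ ν1 * ((m:ℝ)+1) ^ (α₂-1) + μ1 * ((m:ℝ)+1) ^ (α₂-1) + |ν2| * ((m:ℝ)+1) ^ (α₂-1) := by
          have := mul_le_mul_of_nonneg_left d5 hμ1nn
          linarith
      _ = W * ((m:ℝ)+1) ^ (α₂-1) := by rw [hWdef]; ring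
  have hδle : δ ≤ (|ν2| + Kα * W) * ((m:ℝ)+1) ^ (-(3:ℝ)) := by
    have c1' : |ν2| / ((m:ℝ)+1) ^ 3 = |ν2| * ((m:ℝ)+1) ^ (-(3:ℝ)) := by
      rw [Real.rpow_neg hm0.le, show ((3:ℝ)) = ((3:ℕ):ℝ) by norm_num, Real.rpow_natCast]
      ring
    have c3' : ((m:ℝ)+1) ^ (α₂-1) * ((m:ℝ)+1) ^ (-(α₂+2)) = ((m:ℝ)+1) ^ (-(3:ℝ)) := by
      rw [← Real.rpow_add hm0]; congr 1; ring
    have c2' : Kα * |D| * ((m:ℝ)+1) ^ (-(α₂+2)) ≤ Kα * W * ((m:ℝ)+1) ^ (-(3:ℝ)) := by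
      have s1 : Kα * |D| ≤ Kα * (W * ((m:ℝ)+1) ^ (α₂-1)) :=
        mul_le_mul_of_nonneg_left habsD hKαnn
      have s2 : Kα * |D| * ((m:ℝ)+1) ^ (-(α₂+2))
          ≤ Kα * (W * ((m:ℝ)+1) ^ (α₂-1)) * ((m:ℝ)+1) ^ (-(α₂+2)) :=
        mul_le_mul_of_nonneg_right s1 (Real.rpow_nonneg hm0.le _)
      have s3 : Kα * (W * ((m:ℝ)+1) ^ (α₂-1)) * ((m:ℝ)+1) ^ (-(α₂+2))
          = Kα * W * (((m:ℝ)+1) ^ (α₂-1) * ((m:ℝ)+1) ^ (-(α₂+2))) := by ring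
      rw [s3, c3'] at s2
      exact s2
    rw [hδdef, c1']
    have e6 : (|ν2| + Kα * W) * ((m:ℝ)+1) ^ (-(3:ℝ))
        = |ν2| * ((m:ℝ)+1) ^ (-(3:ℝ)) + Kα * W * ((m:ℝ)+1) ^ (-(3:ℝ)) := by ring
    rw [e6]
    linarith
  have hδnn : 0 ≤ δ := by
    rw [hδdef]
    have := abs_nonneg ν2
    have := abs_nonneg D
    have := Real.rpow_nonneg hm0.le (-(α₂+2))
    positivity
  have hδT : ((T:ℝ) - (m:ℝ)) * δ ≤ E3 / (T:ℝ) ^ q := by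
    have t1 : (T:ℝ) - (m:ℝ) ≤ (T:ℝ) := by
      have : (0:ℝ) ≤ (m:ℝ) := Nat.cast_nonneg m
      linarith
    have t1' : (0:ℝ) ≤ (T:ℝ) - (m:ℝ) := by
      have : (m:ℝ) ≤ (T:ℝ) := by exact_mod_cast hmT
      linarith
    have t2 : ((m:ℝ)+1) ^ (-(3:ℝ)) ≤ (β * (T:ℝ)) ^ (-(3:ℝ)) :=
      Real.rpow_le_rpow_of_nonpos hβT0 hβTm (by norm_num)
    have t3 : (β * (T:ℝ)) ^ (-(3:ℝ)) = 1 / (β ^ 3 * (T:ℝ) ^ 3) := by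
      rw [Real.rpow_neg hβT0.le, show ((3:ℝ)) = ((3:ℕ):ℝ) by norm_num, Real.rpow_natCast,
        mul_pow, one_div]
    have hKWnn : 0 ≤ |ν2| + Kα * W := by
      have h21 := abs_nonneg ν2
      have h22 := mul_nonneg hKαnn hWnn
      linarith
    have t4 : δ ≤ (|ν2| + Kα * W) / (β ^ 3 * (T:ℝ) ^ 3) := by
      calc δ ≤ (|ν2| + Kα * W) * ((m:ℝ)+1) ^ (-(3:ℝ)) := hδle
        _ ≤ (|ν2| + Kα * W) * ((β * (T:ℝ)) ^ (-(3:ℝ))) :=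
            mul_le_mul_of_nonneg_left t2 hKWnn
        _ = (|ν2| + Kα * W) / (β ^ 3 * (T:ℝ) ^ 3) := by rw [t3]; ring
    have t5 : ((T:ℝ) - (m:ℝ)) * δ ≤ (T:ℝ) * ((|ν2| + Kα * W) / (β ^ 3 * (T:ℝ) ^ 3)) :=
      mul_le_mul t1 t4 hδnn hT0.le
    have t6 : (T:ℝ) * ((|ν2| + Kα * W) / (β ^ 3 * (T:ℝ) ^ 3)) = E3 / (T:ℝ) ^ 2 := by
      rw [hE3def]
      field_simp
    have t7 : E3 / (T:ℝ) ^ 2 ≤ E3 / (T:ℝ) ^ q :=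
      div_le_div_of_nonneg_left hE3nn hTq0 hT2q
    linarith
  -- conclude
  have hTm : ((T:ℝ)+1) - ((m:ℝ)+1) = (T:ℝ) - (m:ℝ) := by ring
  have final : a (T+1) ≤ 4 * X / (T:ℝ) + (E1 + μ1 * β ^ (-q) + E3) / (T:ℝ) ^ q := by
    calc a (T+1) ≤ ν2 / ((T:ℝ)+1) + D * ((T:ℝ)+1) ^ (-α₂) + (((T:ℝ)+1) - ((m:ℝ)+1)) * δ :=
          hfin'
      _ ≤ ν2 / ((T:ℝ)+1) + ((ν1 - ν2) * r ^ (α₂-1) / ((T:ℝ)+1)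
            + μ1 * ((m:ℝ)+1) ^ (-q) * r ^ α₂) + ((T:ℝ) - (m:ℝ)) * δ := by
          rw [hTm]
          linarith [hterm2]
      _ ≤ (4 * X / (T:ℝ) + E1 / (T:ℝ) ^ q) + (μ1 * β ^ (-q)) / (T:ℝ) ^ q
            + E3 / (T:ℝ) ^ q := by
          linarith [hA, hBterm, hδT]
      _ = 4 * X / (T:ℝ) + (E1 + μ1 * β ^ (-q) + E3) / (T:ℝ) ^ q := by ring
  rw [hM]
  have last : (E1 + μ1 * β ^ (-q) + E3) / (T:ℝ) ^ q
      ≤ (E1 + μ1 * β ^ (-q) + E3 + 1) / (T:ℝ) ^ q := by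
    apply div_le_div_of_nonneg_right ?_ hTq0.le
    linarith
  have e9 : (1 / (T:ℝ)) * (4 * X) = 4 * X / (T:ℝ) := by ring
  rw [e9]
  linarith [final, last]
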